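/- arXiv:2202.12193 — 5 statements merged into one kernel-verified Lean document; each statement's English description precedes it below -/
import Mathlib

section
/- If f1 and c1 satisfy, for all lists l1, l2: p(l1 ++ l2) = c1((p l1, f1 l1), (p l2, f1 l2)), and f2 and c2 satisfy, for all lists l1, l2: (f1(l1 ++ l2)) = c2(((p l1, f1 l1), f2 l1), ((p l2, f1 l2), f2 l2)), then defining f l = (f1 l, f2 l) and c((a1,(b1,d1)),(a2,(b2,d2))) = (c1((a1,b1),(a2,b2)), c2(((a1,b1),d1),((a2,b2),d2))), we have for all lists l1, l2: (p(l1 ++ l2), f(l1 ++ l2)) = c((p l1, f l1), (p l2, f l2)). -/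
/-- Correctness of the `decomposition` rule for divide-and-conquer synthesis:
if `(f1, c1)` solves the partial lifting problem for `p` and `(f2, c2)` solves the
lifting problem for `f1` (computing the pair `(f1, f2)` on `l1 ++ l2`), then
`f l = (f1 l, f2 l)` together with the assembled combinator `c` solves the
lifting problem for `p`. -/
theorem decomposition_correct {A B C D : Type*}
    (p : List A → B) (f1 : List A → C) (c1 : (B × C) × (B × C) → B)
    (f2 : List A → D) (c2 : ((B × C) × D) × ((B × C) × D) → C × D)
    (h1 : ∀ l1 l2 : List A, p (l1 ++ l2) = c1 ((p l1, f1 l1), (p l2, f1 l2)))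
    (h2 : ∀ l1 l2 : List A,
      (f1 (l1 ++ l2), f2 (l1 ++ l2)) =
        c2 (((p l1, f1 l1), f2 l1), ((p l2, f1 l2), f2 l2))) :
    ∀ l1 l2 : List A,
      (p (l1 ++ l2), (fun l => (f1 l, f2 l)) (l1 ++ l2)) =
        (fun x : (B × (C × D)) × (B × (C × D)) =>
          match x with
          | ((a1, (b1, d1)), (a2, (b2, d2))) =>
            (c1 ((a1, b1), (a2, b2)), c2 (((a1, b1), d1), ((a2, b2), d2))))
          ((p l1, (fun l => (f1 l, f2 l)) l1), (p l2, (fun l => (f1 l, f2 l)) l2)) := by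
  intro l1 l2
  simp only []
  exact Prod.ext (h1 l1 l2) (h2 l1 l2)
end

section
/- Let E be a finite set of examples, and for each composed program (finite list of lifting functions) f̄, let E|_f̄ ⊆ E be the set of examples satisfied by f̄, where E|_f̄ equals the union of E|_[g] over lifting functions g in f̄. Define f̄ to be 'covered' if there exists f̄' with f̄' ≺ f̄ and E|_f̄ ⊆ E|_f̄'. Suppose ≺ is a strict order on composed programs such that for any f̄ and any partition of its functions into disjoint sublists f̄₁, f̄₂, if f̄₂' ≺ f̄₂ then the program f̄' formed from the functions of f̄₂' together with f̄₁ satisfies f̄' ≺ f̄. Then: if f̄ is uncovered, every sublist f̄'' ⊆ f̄ (containing a subset of the functions of f̄) is uncovered. -/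
/-- Pruning lemma for observational covering (abstract form): composed programs are
(multi)sets of lifting functions, satisfaction sets distribute over the component
functions, and the strict order `prec` is monotone under adjoining the same extra
functions to both sides.  Then every sub-program of an uncovered composed program
is uncovered. -/
theorem uncovered_of_subset {F E : Type*}
    (satF : F → Set E) (sat : Multiset F → Set E)
    (hsat : ∀ m : Multiset F, sat m = ⋃ g ∈ m, satF g)
    (prec : Multiset F → Multiset F → Prop)
    (hmono : ∀ m₁ m₂ m₂' : Multiset F, prec m₂' m₂ → prec (m₂' + m₁) (m₂ + m₁))
    (covered : Multiset F → Prop)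
    (hcov : ∀ m, covered m ↔ ∃ m', prec m' m ∧ sat m ⊆ sat m')
    (f : Multiset F) (hf : ¬ covered f) :
    ∀ f'' : Multiset F, f'' ≤ f → ¬ covered f'' := by
  intro f'' hle hc
  obtain ⟨m', hp, hs⟩ := (hcov f'').mp hc
  apply hf
  obtain ⟨d, rfl⟩ := Multiset.le_iff_exists_add.mp hle
  refine (hcov _).mpr ⟨m' + d, hmono d f'' m' hp, ?_⟩
  intro x hx
  rw [hsat] at hx
  simp only [Set.mem_iUnion] at hx
  obtain ⟨g, hg, hxg⟩ := hx
  rw [hsat]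
  simp only [Set.mem_iUnion]
  by_cases hgm : g ∈ f''
  · have : x ∈ sat f'' := by
      rw [hsat]; simp only [Set.mem_iUnion]; exact ⟨g, hgm, hxg⟩
    have := hs this
    rw [hsat] at this
    simp only [Set.mem_iUnion] at this
    obtain ⟨g', hg', hxg'⟩ := this
    exact ⟨g', Multiset.mem_add.mpr (Or.inl hg'), hxg'⟩
  · rcases Multiset.mem_add.mp hg with h | h
    · exact absurd h hgm
    · exact ⟨g, Multiset.mem_add.mpr (Or.inr h), hxg⟩
end

section
/- For the maximum segment sum: for all integer lists l₁, l₂, mss(l₁ ++ l₂) = max(mss l₁, max(mss l₂, mts l₁ + mps l₂)), where mss l is the maximum over all (possibly empty) segments of l of the sum of their elements, mts l is the maximum suffix sum of l, and mps l is the maximum prefix sum of l. -/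
/-- Maximum segment sum: the maximum, over all (possibly empty) segments `s` of `l`
(i.e. `l = u ++ s ++ v`), of `s.sum`.  Segments are enumerated as tails of inits. -/
def mss (l : List ℤ) : ℤ := (((l.inits.flatMap List.tails).map List.sum).foldr max 0)

/-- Maximum prefix sum (the empty prefix is allowed). -/
def mps (l : List ℤ) : ℤ := ((l.inits.map List.sum).foldr max 0)

/-- Maximum tail (suffix) sum (the empty suffix is allowed). -/
def mts (l : List ℤ) : ℤ := ((l.tails.map List.sum).foldr max 0)

namespace MssAux

lemma foldr_max_base (a b : ℤ) (t : List ℤ) :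
    t.foldr max (max a b) = max a (t.foldr max b) := by
  induction t with
  | nil => rfl
  | cons c t ih => simp [List.foldr_cons, ih]; omega

lemma le_foldr_base (b : ℤ) (t : List ℤ) : b ≤ t.foldr max b := by
  induction t with
  | nil => simp
  | cons c t ih => simp [List.foldr_cons]; omega

lemma foldr_map_add (x b : ℤ) (t : List ℤ) :
    (t.map (x + ·)).foldr max (x + b) = x + t.foldr max b := by
  induction t with
  | nil => rfl
  | cons c t ih => simp [List.foldr_cons, ih]

lemma foldr_max_mem {c : ℤ} {t : List ℤ} (h : c ∈ t) (b : ℤ) :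
    t.foldr max (max b c) = t.foldr max b := by
  induction t with
  | nil => simp at h
  | cons a t ih =>
    rcases List.mem_cons.mp h with rfl | h
    · rw [List.foldr_cons, List.foldr_cons, max_comm b c, foldr_max_base]
      omega
    · rw [List.foldr_cons, List.foldr_cons, ih h]

lemma key_map_add {t : List ℤ} (x : ℤ) (h : (0:ℤ) ∈ t) :
    (t.map (x + ·)).foldr max 0 = max 0 (x + t.foldr max 0) := by
  have hx : x ∈ t.map (x + ·) := by
    exact List.mem_map.mpr ⟨0, h, by ring⟩
  have h1 : (t.map (x + ·)).foldr max (max 0 x) = (t.map (x + ·)).foldr max 0 :=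
    foldr_max_mem hx 0
  have h2 : (t.map (x + ·)).foldr max (max 0 x) = max 0 ((t.map (x + ·)).foldr max x) :=
    foldr_max_base 0 x _
  have h3 : (t.map (x + ·)).foldr max (x + 0) = x + t.foldr max 0 := foldr_map_add x 0 t
  rw [add_zero] at h3
  rw [← h1, h2, h3]

lemma zero_mem_sums_inits (l : List ℤ) : (0:ℤ) ∈ l.inits.map List.sum := by
  exact List.mem_map.mpr ⟨[], by simp, by simp⟩

/-- `F s` is the max (with 0) of the sums of the lists in `s`. -/
def F (s : List (List ℤ)) : ℤ := (s.map List.sum).foldr max 0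

lemma F_nonneg (s : List (List ℤ)) : 0 ≤ F s := le_foldr_base 0 _

lemma F_append (s t : List (List ℤ)) : F (s ++ t) = max (F s) (F t) := by
  unfold F
  rw [List.map_append, List.foldr_append]
  have h : (s.map List.sum).foldr max (max ((t.map List.sum).foldr max 0) 0)
      = max ((t.map List.sum).foldr max 0) ((s.map List.sum).foldr max 0) :=
    foldr_max_base _ 0 _
  have h0 : max ((t.map List.sum).foldr max 0) (0:ℤ) = (t.map List.sum).foldr max 0 := by
    have := le_foldr_base (0:ℤ) (t.map List.sum); omega
  rw [← h0, h]; omega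

lemma F_cons (a : List ℤ) (s : List (List ℤ)) : F (a :: s) = max a.sum (F s) := rfl

lemma mps_nonneg (l : List ℤ) : 0 ≤ mps l := le_foldr_base 0 _
lemma mts_nonneg (l : List ℤ) : 0 ≤ mts l := le_foldr_base 0 _
lemma mss_nonneg (l : List ℤ) : 0 ≤ mss l := le_foldr_base 0 _

lemma mps_cons (x : ℤ) (l : List ℤ) : mps (x :: l) = max 0 (x + mps l) := by
  unfold mps
  rw [List.inits_cons, List.map_cons, List.sum_nil, List.foldr_cons,
    List.map_map]
  have : (List.sum ∘ fun t => x :: t) = fun t : List ℤ => x + t.sum := by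
    funext t; simp
  rw [this]
  have : (List.map (fun t : List ℤ => x + t.sum) l.inits)
      = (l.inits.map List.sum).map (x + ·) := by
    rw [List.map_map]; rfl
  rw [this, key_map_add x (zero_mem_sums_inits l)]
  omega

lemma mts_cons (x : ℤ) (l : List ℤ) : mts (x :: l) = max (x + l.sum) (mts l) := by
  unfold mts
  rw [List.tails_cons, List.map_cons, List.foldr_cons, List.sum_cons]

lemma mss_cons (x : ℤ) (l : List ℤ) : mss (x :: l) = max (mps (x :: l)) (mss l) := by
  have hflat : ∀ L : List (List ℤ),
      F (L.flatMap (fun p => (x :: p) :: p.tails))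
        = max (F (L.map (fun p => x :: p))) (F (L.flatMap List.tails)) := by
    intro L
    induction L with
    | nil => simp [F]
    | cons a L ih =>
      rw [List.flatMap_cons, F_append, F_cons, ih, List.map_cons, F_cons,
        List.flatMap_cons, F_append]
      omega
  have h1 : mss (x :: l) = F ((x :: l).inits.flatMap List.tails) := rfl
  rw [h1, List.inits_cons, List.flatMap_cons, F_append]
  have h2 : (List.map (fun t => x :: t) l.inits).flatMap List.tails
      = l.inits.flatMap (fun p => (x :: p) :: p.tails) := by
    rw [List.flatMap_map]; simp [Function.comp, List.tails_cons]
  rw [h2, hflat]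
  have h3 : F (l.inits.map (fun p => x :: p)) = max 0 (x + mps l) := by
    unfold F
    rw [List.map_map]
    have : (List.sum ∘ fun p : List ℤ => x :: p) = fun p : List ℤ => x + p.sum := by
      funext p; simp
    rw [this]
    have : (List.map (fun p : List ℤ => x + p.sum) l.inits)
        = (l.inits.map List.sum).map (x + ·) := by
      rw [List.map_map]; rfl
    rw [this, key_map_add x (zero_mem_sums_inits l)]
    unfold mps; rfl
  have h4 : F (l.inits.flatMap List.tails) = mss l := rfl
  have h5 : F ([] : List ℤ).tails = 0 := by simp [F]
  rw [h3, h4, h5, mps_cons]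
  have := mss_nonneg l
  omega

lemma sum_le_mps (l : List ℤ) : l.sum ≤ mps l := by
  unfold mps
  have h : l.sum ∈ l.inits.map List.sum :=
    List.mem_map.mpr ⟨l, by simp, rfl⟩
  have := foldr_max_mem h (0:ℤ)
  have hle := le_foldr_base (max 0 l.sum) (l.inits.map List.sum)
  omega

lemma mps_append (l₁ l₂ : List ℤ) :
    mps (l₁ ++ l₂) = max (mps l₁) (l₁.sum + mps l₂) := by
  set c := l₁.sum with hc
  set T := l₂.inits.tail with hT
  have h1 : mps (l₁ ++ l₂) = max (F l₁.inits) (F (T.map (fun l => l₁ ++ l))) := by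
    show F ((l₁ ++ l₂).inits) = _
    rw [List.inits_append, F_append]
  have hinit : l₂.inits = [] :: T := by
    cases l₂ <;> simp [hT, List.inits_cons]
  set S := T.map List.sum with hS
  have hshift : F (T.map (fun l => l₁ ++ l)) = (S.map (c + ·)).foldr max 0 := by
    unfold F
    rw [List.map_map, hS, List.map_map]
    have hfun : (List.sum ∘ fun l => l₁ ++ l) = ((c + ·) ∘ List.sum) := by
      funext t; simp [hc]
    rw [hfun]
  have hkey : ((0 :: S).map (c + ·)).foldr max 0 = max 0 (c + (0 :: S).foldr max 0) :=
    key_map_add c (by simp)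
  have hmps2 : mps l₂ = (0 :: S).foldr max 0 := by
    show F l₂.inits = _
    rw [hinit]
    unfold F
    rw [List.map_cons, List.sum_nil, hS]
  have hcons : ((0 :: S).map (c + ·)).foldr max 0
      = max c ((S.map (c + ·)).foldr max 0) := by
    rw [List.map_cons, add_zero, List.foldr_cons]
  have hcle : c ≤ mps l₁ := sum_le_mps l₁
  have hX : 0 ≤ (S.map (c + ·)).foldr max 0 := le_foldr_base 0 _
  have hm1 : mps l₁ = F l₁.inits := rfl
  have h2 : 0 ≤ mps l₂ := mps_nonneg l₂
  rw [h1, hshift, ← hm1]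
  rw [hcons] at hkey
  rw [← hmps2] at hkey
  have h3 := mps_nonneg l₁
  omega

lemma mps_le_mss (l : List ℤ) : mps l ≤ mss l := by
  cases l with
  | nil => exact le_of_eq rfl
  | cons x l => rw [mss_cons]; exact le_max_left _ _

end MssAux

/-- Correctness of the divide-and-conquer combinator for maximum segment sum. -/
theorem mss_append (l₁ l₂ : List ℤ) :
    mss (l₁ ++ l₂) = max (mss l₁) (max (mss l₂) (mts l₁ + mps l₂)) := by
  induction l₁ with
  | nil =>
    have h0 : mss ([] : List ℤ) = 0 := rfl
    have h1 : mts ([] : List ℤ) = 0 := rfl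
    have h2 := MssAux.mps_le_mss l₂
    have h3 := MssAux.mss_nonneg l₂
    rw [List.nil_append, h0, h1]
    omega
  | cons x l₁ ih =>
    rw [List.cons_append, MssAux.mss_cons, MssAux.mps_cons, MssAux.mps_append, ih,
      MssAux.mss_cons x l₁, MssAux.mps_cons x l₁, MssAux.mts_cons x l₁]
    have := MssAux.mps_nonneg l₂
    have := MssAux.mps_nonneg l₁
    have := MssAux.mss_nonneg l₁
    have := MssAux.mss_nonneg l₂
    have := MssAux.mts_nonneg l₁
    omega
end

section
/- For the 'line of sight' predicate ls, where ls l holds iff the last element of a nonempty list l is greater than or equal to every element of l: for all nonempty integer lists l₁, l₂, ls(l₁ ++ l₂) ↔ (ls l₂ ∧ maximum l₁ ≤ maximum l₂). -/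
/-- Combinator identity for the 'line of sight' predicate: for nonempty lists,
the last element of `l₁ ++ l₂` bounds every element iff the last element of `l₂`
bounds every element of `l₂` and the maximum of `l₁` is at most the maximum of
`l₂`. -/
theorem line_of_sight_append (l₁ l₂ : List ℤ) (h₁ : l₁ ≠ []) (h₂ : l₂ ≠ []) :
    (∀ x ∈ l₁ ++ l₂, x ≤ (l₁ ++ l₂).getLast (by simp [h₂])) ↔
    ((∀ x ∈ l₂, x ≤ l₂.getLast h₂) ∧ l₁.maximum ≤ l₂.maximum) := by
  have hg : (l₁ ++ l₂).getLast (by simp [h₂]) = l₂.getLast h₂ :=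
    List.getLast_append_of_ne_nil (h₂ := h₂) _
  rw [hg]
  constructor
  · intro h
    refine ⟨fun x hx => h x (by simp [hx]), ?_⟩
    have h1 : l₁.maximum ≤ (l₂.getLast h₂ : WithBot ℤ) := by
      apply List.maximum_le_of_forall_le
      intro a ha
      exact_mod_cast h a (by simp [ha])
    exact h1.trans (List.le_maximum_of_mem' (List.getLast_mem h₂))
  · rintro ⟨hls, hmax⟩ x hx
    rcases List.mem_append.1 hx with hx1 | hx2
    · have hx1' : (x : WithBot ℤ) ≤ l₂.maximum :=
        (List.le_maximum_of_mem' hx1).trans hmax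
      have h2 : l₂.maximum ≤ (l₂.getLast h₂ : WithBot ℤ) := by
        apply List.maximum_le_of_forall_le
        intro a ha
        exact_mod_cast hls a ha
      exact_mod_cast hx1'.trans h2
    · exact hls x hx2
end

section
/- For the maximum segment product with the convention that the empty segment has product 1: for all integer lists l₁, l₂, msp(l₁ ++ l₂) = max(msp l₁, max(msp l₂, max(maxtp l₁ * maxpp l₂, mintp l₁ * minpp l₂))), where msp l is the maximum product over all segments (including the empty segment) of l, maxpp/minpp are the maximum/minimum products over prefixes (including the empty prefix), and maxtp/mintp are the maximum/minimum products over suffixes (including the empty suffix). -/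
/-- Maximum segment product (the empty segment, with product `1`, is allowed). -/
def msp (l : List ℤ) : ℤ := (((l.inits.flatMap List.tails).map List.prod).foldr max 1)

/-- Maximum prefix product (the empty prefix is allowed). -/
def maxpp (l : List ℤ) : ℤ := ((l.inits.map List.prod).foldr max 1)

/-- Minimum prefix product (the empty prefix is allowed). -/
def minpp (l : List ℤ) : ℤ := ((l.inits.map List.prod).foldr min 1)

/-- Maximum tail (suffix) product (the empty suffix is allowed). -/
def maxtp (l : List ℤ) : ℤ := ((l.tails.map List.prod).foldr max 1)

/-- Minimum tail (suffix) product (the empty suffix is allowed). -/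
def mintp (l : List ℤ) : ℤ := ((l.tails.map List.prod).foldr min 1)

section Aux

lemma le_foldr_max {L : List ℤ} {b x : ℤ} (h : x ∈ L) : x ≤ L.foldr max b := by
  induction L with
  | nil => simp at h
  | cons a L ih =>
    simp only [List.foldr_cons]
    rcases List.mem_cons.mp h with h | h
    · exact h ▸ le_max_left _ _
    · exact le_trans (ih h) (le_max_right _ _)

lemma foldr_min_le {L : List ℤ} {b x : ℤ} (h : x ∈ L) : L.foldr min b ≤ x := by
  induction L with
  | nil => simp at h
  | cons a L ih =>
    simp only [List.foldr_cons]
    rcases List.mem_cons.mp h with h | h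
    · exact h ▸ min_le_left _ _
    · exact le_trans (min_le_right _ _) (ih h)

lemma init_le_foldr_max (L : List ℤ) (b : ℤ) : b ≤ L.foldr max b := by
  induction L with
  | nil => simp
  | cons a L ih => exact le_trans ih (le_max_right _ _)

lemma foldr_max_le {L : List ℤ} {b c : ℤ} (hb : b ≤ c) (h : ∀ x ∈ L, x ≤ c) :
    L.foldr max b ≤ c := by
  induction L with
  | nil => exact hb
  | cons a L ih =>
    simp only [List.foldr_cons]
    exact max_le (h a List.mem_cons_self) (ih fun x hx => h x (List.mem_cons_of_mem _ hx))

lemma foldr_max_mem {L : List ℤ} {b : ℤ} : L.foldr max b = b ∨ L.foldr max b ∈ L := by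
  induction L with
  | nil => left; rfl
  | cons a L ih =>
    simp only [List.foldr_cons]
    rcases max_cases a (L.foldr max b) with ⟨h, _⟩ | ⟨h, _⟩
    · right; rw [h]; exact List.mem_cons_self
    · rw [h]
      rcases ih with h' | h'
      · left; exact h'
      · right; exact List.mem_cons_of_mem _ h'

lemma foldr_min_mem {L : List ℤ} {b : ℤ} : L.foldr min b = b ∨ L.foldr min b ∈ L := by
  induction L with
  | nil => left; rfl
  | cons a L ih =>
    simp only [List.foldr_cons]
    rcases min_cases a (L.foldr min b) with ⟨h, _⟩ | ⟨h, _⟩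
    · right; rw [h]; exact List.mem_cons_self
    · rw [h]
      rcases ih with h' | h'
      · left; exact h'
      · right; exact List.mem_cons_of_mem _ h'

lemma mem_segs {s l : List ℤ} : s ∈ l.inits.flatMap List.tails ↔ s <:+: l := by
  simp only [List.mem_flatMap, List.mem_inits, List.mem_tails]
  constructor
  · rintro ⟨i, ⟨v, rfl⟩, u, rfl⟩
    exact ⟨u, v, by simp⟩
  · rintro ⟨u, v, rfl⟩
    exact ⟨u ++ s, ⟨v, by simp⟩, u, rfl⟩

lemma corner {p q r s a b : ℤ} (hp : p ≤ a) (hq : a ≤ q) (hr : r ≤ b) (hs : b ≤ s)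
    (h1q : 1 ≤ q) (h1s : 1 ≤ s) : a * b ≤ max (q * s) (p * r) := by
  rcases le_or_gt 0 b with hb | hb
  · have h1 : a * b ≤ q * b := mul_le_mul_of_nonneg_right hq hb
    have h2 : q * b ≤ q * s := mul_le_mul_of_nonneg_left hs (by linarith)
    exact le_trans (le_trans h1 h2) (le_max_left _ _)
  · have h1 : a * b ≤ p * b := mul_le_mul_of_nonpos_right hp hb.le
    rcases le_or_gt 0 p with hp0 | hp0
    · have h2 : p * b ≤ 0 := mul_nonpos_of_nonneg_of_nonpos hp0 hb.le
      have h3 : (1 : ℤ) ≤ q * s := one_le_mul_of_one_le_of_one_le h1q h1s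
      exact le_trans (by linarith) (le_max_left _ _)
    · have h2 : p * b ≤ p * r := mul_le_mul_of_nonpos_left hr hp0.le
      exact le_trans (le_trans h1 h2) (le_max_right _ _)

lemma one_le_msp (l : List ℤ) : 1 ≤ msp l := init_le_foldr_max _ _

lemma prod_le_msp {s l : List ℤ} (h : s <:+: l) : s.prod ≤ msp l :=
  le_foldr_max (List.mem_map_of_mem (mem_segs.mpr h))

lemma suffix_bounds {t l : List ℤ} (h : t <:+ l) :
    mintp l ≤ t.prod ∧ t.prod ≤ maxtp l :=
  ⟨foldr_min_le (List.mem_map_of_mem ((List.mem_tails _ _).mpr h)),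
   le_foldr_max (List.mem_map_of_mem ((List.mem_tails _ _).mpr h))⟩

lemma prefix_bounds {t l : List ℤ} (h : t <+: l) :
    minpp l ≤ t.prod ∧ t.prod ≤ maxpp l :=
  ⟨foldr_min_le (List.mem_map_of_mem ((List.mem_inits _ _).mpr h)),
   le_foldr_max (List.mem_map_of_mem ((List.mem_inits _ _).mpr h))⟩

lemma maxtp_exists (l : List ℤ) : ∃ t, t <:+ l ∧ maxtp l = t.prod := by
  rcases (foldr_max_mem : _ ∨ maxtp l ∈ _) with h | h
  · exact ⟨[], List.nil_suffix, by simpa [maxtp] using h⟩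
  · obtain ⟨t, ht, he⟩ := List.mem_map.mp h
    exact ⟨t, (List.mem_tails _ _).mp ht, he.symm⟩

lemma mintp_exists (l : List ℤ) : ∃ t, t <:+ l ∧ mintp l = t.prod := by
  rcases (foldr_min_mem : _ ∨ mintp l ∈ _) with h | h
  · exact ⟨[], List.nil_suffix, by simpa [mintp] using h⟩
  · obtain ⟨t, ht, he⟩ := List.mem_map.mp h
    exact ⟨t, (List.mem_tails _ _).mp ht, he.symm⟩

lemma maxpp_exists (l : List ℤ) : ∃ t, t <+: l ∧ maxpp l = t.prod := by
  rcases (foldr_max_mem : _ ∨ maxpp l ∈ _) with h | h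
  · exact ⟨[], List.nil_prefix, by simpa [maxpp] using h⟩
  · obtain ⟨t, ht, he⟩ := List.mem_map.mp h
    exact ⟨t, (List.mem_inits _ _).mp ht, he.symm⟩

lemma minpp_exists (l : List ℤ) : ∃ t, t <+: l ∧ minpp l = t.prod := by
  rcases (foldr_min_mem : _ ∨ minpp l ∈ _) with h | h
  · exact ⟨[], List.nil_prefix, by simpa [minpp] using h⟩
  · obtain ⟨t, ht, he⟩ := List.mem_map.mp h
    exact ⟨t, (List.mem_inits _ _).mp ht, he.symm⟩

lemma one_le_maxtp (l : List ℤ) : 1 ≤ maxtp l := init_le_foldr_max _ _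
lemma one_le_maxpp (l : List ℤ) : 1 ≤ maxpp l := init_le_foldr_max _ _

end Aux

/-- Correctness of the combinator for maximum segment product from the case study. -/
theorem msp_append (l₁ l₂ : List ℤ) :
    msp (l₁ ++ l₂) =
      max (msp l₁) (max (msp l₂)
        (max (maxtp l₁ * maxpp l₂) (mintp l₁ * minpp l₂))) := by
  apply le_antisymm
  · apply foldr_max_le
    · exact le_trans (one_le_msp l₁) (le_max_left _ _)
    · intro x hx
      obtain ⟨s, hs, rfl⟩ := List.mem_map.mp hx
      obtain ⟨u, v, huv⟩ := mem_segs.mp hs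
      -- u ++ s ++ v = l₁ ++ l₂
      rw [List.append_assoc] at huv
      rcases List.append_eq_append_iff.mp huv with ⟨a, ha1, ha2⟩ | ⟨c, hc1, hc2⟩
      · -- l₁ = u ++ a, s ++ v = a ++ l₂
        rcases List.append_eq_append_iff.mp ha2 with ⟨b, hb1, hb2⟩ | ⟨c, hc1, hc2⟩
        · -- a = s ++ b : s is infix of l₁
          have : s <:+: l₁ := ⟨u, b, by rw [ha1, hb1, List.append_assoc]⟩
          exact le_trans (prod_le_msp this) (le_max_left _ _)
        · -- s = a ++ c, l₂ = c ++ v : split case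
          have hsuf : a <:+ l₁ := ⟨u, ha1.symm⟩
          have hpre : c <+: l₂ := ⟨v, hc2.symm⟩
          obtain ⟨ha_lo, ha_hi⟩ := suffix_bounds hsuf
          obtain ⟨hc_lo, hc_hi⟩ := prefix_bounds hpre
          have := corner ha_lo ha_hi hc_lo hc_hi (one_le_maxtp l₁) (one_le_maxpp l₂)
          rw [hc1, List.prod_append]
          exact le_trans this (le_trans (le_max_right _ _) (le_max_right _ _))
      · -- u = l₁ ++ c, l₂ = c ++ (s ++ v) : s infix of l₂
        have : s <:+: l₂ := ⟨c, v, by rw [hc2, List.append_assoc]⟩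
        exact le_trans (prod_le_msp this)
          (le_trans (le_max_left _ _) (le_max_right _ _))
  · apply max_le
    · apply foldr_max_le (one_le_msp _)
      intro x hx
      obtain ⟨s, hs, rfl⟩ := List.mem_map.mp hx
      obtain ⟨u, v, huv⟩ := mem_segs.mp hs
      exact prod_le_msp ⟨u, v ++ l₂, by rw [← List.append_assoc, huv]⟩
    apply max_le
    · apply foldr_max_le (one_le_msp _)
      intro x hx
      obtain ⟨s, hs, rfl⟩ := List.mem_map.mp hx
      obtain ⟨u, v, huv⟩ := mem_segs.mp hs
      exact prod_le_msp ⟨l₁ ++ u, v, by rw [huv.symm]; simp [List.append_assoc]⟩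
    apply max_le
    · obtain ⟨t, ⟨u, hu⟩, ht⟩ := maxtp_exists l₁
      obtain ⟨p, ⟨v, hv⟩, hp⟩ := maxpp_exists l₂
      rw [ht, hp, ← List.prod_append]
      exact prod_le_msp ⟨u, v, by rw [← hu, ← hv]; simp [List.append_assoc]⟩
    · obtain ⟨t, ⟨u, hu⟩, ht⟩ := mintp_exists l₁
      obtain ⟨p, ⟨v, hv⟩, hp⟩ := minpp_exists l₂
      rw [ht, hp, ← List.prod_append]
      exact prod_le_msp ⟨u, v, by rw [← hu, ← hv]; simp [List.append_assoc]⟩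
end
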